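/- Let a, b ∈ ℝ with a > 0, G_{a+ib}(x) = (a+ib)^{−d/2} e^{−π|x|²/(a+ib)}, g(y) = e^{−π|y|²}, and 1 ≤ q < ∞. Then ‖𝓕(G_{a+ib} · T_x g)‖_{L^q} = ((a+1)²+b²)^{(d/2)(1/q − 1/2)} · q^{−d/(2q)} · (a(a+1)+b²)^{−d/(2q)} · e^{−πa|x|²/(a(a+1)+b²)} for every x ∈ ℝ^d. -/

import Mathlib

open MeasureTheory FourierTransform Complex
open scoped Real ENNReal

open scoped RealInnerProductSpace

variable {d : ℕ}
local notation "E" => EuclideanSpace ℝ (Fin d)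

lemma normsq_eq (z : E) : ‖z‖^2 = ∑ i, z i^2 := by
  rw [← real_inner_self_eq_norm_sq]
  rw [PiLp.inner_apply]; simp [sq]

lemma lemA (B : ℂ) (hB : 0 < B.re) (x w : E) :
    ∫ y : E, Complex.exp (-B * (‖y‖:ℂ)^2 + (2*π*(⟪x,y⟫:ℝ) - 2*π*Complex.I*(⟪y,w⟫:ℝ))) =
      (π/B)^((d:ℂ)/2) *
        Complex.exp ((π:ℂ)^2 * ((‖x‖:ℂ)^2 - 2*Complex.I*(⟪x,w⟫:ℝ) - (‖w‖:ℂ)^2) / B) := by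
  have hmp := (EuclideanSpace.volume_preserving_symm_measurableEquiv_toLp (Fin d)).symm
  rw [← hmp.integral_comp (MeasurableEquiv.measurableEmbedding _)]
  have key := GaussianFourier.integral_cexp_neg_mul_sum_add (ι := Fin d) hB
      (fun i => 2*π*(x i) - 2*π*Complex.I*(w i))
  rw [Fintype.card_fin] at key
  have hL : (fun v : Fin d → ℝ =>
      Complex.exp (-B * (‖((MeasurableEquiv.toLp 2 (Fin d → ℝ)).symm).symm v‖:ℂ)^2 +
        (2*π*(⟪x,((MeasurableEquiv.toLp 2 (Fin d → ℝ)).symm).symm v⟫:ℝ) -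
         2*π*Complex.I*(⟪((MeasurableEquiv.toLp 2 (Fin d → ℝ)).symm).symm v,w⟫:ℝ)))) =
      (fun v : Fin d → ℝ => Complex.exp (-B * ∑ i, (v i:ℂ)^2 +
        ∑ i, (2*π*(x i) - 2*π*Complex.I*(w i)) * v i)) := by
    funext v
    congr 1
    rw [show (((‖((MeasurableEquiv.toLp 2 (Fin d → ℝ)).symm).symm v‖:ℝ)):ℂ)^2
          = ((∑ i, (v i)^2 : ℝ):ℂ) from by norm_cast; rw [normsq_eq]; exact Finset.sum_congr rfl fun i _ => rfl,
       show (⟪x,((MeasurableEquiv.toLp 2 (Fin d → ℝ)).symm).symm v⟫:ℝ) = ∑ i, x i * v i from by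
          simp [PiLp.inner_apply]; exact Finset.sum_congr rfl fun i _ => mul_comm _ _,
       show (⟪((MeasurableEquiv.toLp 2 (Fin d → ℝ)).symm).symm v, w⟫:ℝ) = ∑ i, v i * w i from by
          simp [PiLp.inner_apply]; exact Finset.sum_congr rfl fun i _ => mul_comm _ _]
    push_cast
    rw [Finset.mul_sum (f := fun i => ((x i : ℂ)) * ((v i : ℂ))),
        Finset.mul_sum (f := fun i => ((v i : ℂ)) * ((w i : ℂ))),
        ← Finset.sum_sub_distrib]
    congr 1
    exact Finset.sum_congr rfl fun i _ => by ring
  rw [show ((fun v : Fin d → ℝ =>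
      Complex.exp (-B * (‖((MeasurableEquiv.toLp 2 (Fin d → ℝ)).symm).symm v‖:ℂ)^2 +
        (2*π*(⟪x,((MeasurableEquiv.toLp 2 (Fin d → ℝ)).symm).symm v⟫:ℝ) -
         2*π*Complex.I*(⟪((MeasurableEquiv.toLp 2 (Fin d → ℝ)).symm).symm v,w⟫:ℝ))))) =
      (fun v : Fin d → ℝ => Complex.exp (-B * ∑ i, (v i:ℂ)^2 +
        ∑ i, (2*π*(x i) - 2*π*Complex.I*(w i)) * v i)) from hL, key]
  congr 2
  have hs : (∑ i, (2*π*(x i:ℂ) - 2*π*Complex.I*(w i))^2) =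
      4*π^2 * ((‖x‖:ℂ)^2 - 2*Complex.I*(⟪x,w⟫:ℝ) - (‖w‖:ℂ)^2) := by
    have h1 : (‖x‖:ℂ)^2 = ∑ i, (x i:ℂ)^2 := by
      norm_cast; rw [normsq_eq]
    have h2 : (‖w‖:ℂ)^2 = ∑ i, (w i:ℂ)^2 := by
      norm_cast; rw [normsq_eq]
    have h3 : ((⟪x,w⟫:ℝ):ℂ) = ∑ i, (x i:ℂ) * (w i:ℂ) := by
      norm_cast
      simp [PiLp.inner_apply]; exact Finset.sum_congr rfl fun i _ => mul_comm _ _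
    rw [h1, h2, h3, Finset.mul_sum (f := fun i => ((x i:ℂ)) * ((w i:ℂ))),
      ← Finset.sum_sub_distrib, ← Finset.sum_sub_distrib, Finset.mul_sum]
    exact Finset.sum_congr rfl (fun i _ => by ring_nf; rw [Complex.I_sq]; ring)
  rw [hs]
  ring

section main
variable (a b : ℝ) (ha : 0 < a)

lemma lemB (d : ℕ) (a b : ℝ) (ha : 0 < a) (x w : EuclideanSpace ℝ (Fin d)) :
    (𝓕 (fun y : EuclideanSpace ℝ (Fin d) =>
            ((a : ℂ) + b * I) ^ (-(d : ℂ) / 2) *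
              Complex.exp (-(π : ℂ) * (‖y‖ ^ 2 : ℝ) / ((a : ℂ) + b * I)) *
              Complex.exp (-(π : ℂ) * (‖y - x‖ ^ 2 : ℝ)))) w =
      ((a : ℂ) + b * I) ^ (-(d : ℂ) / 2) * (π/((π:ℂ)/((a : ℂ) + b * I) + π))^((d:ℂ)/2) *
        Complex.exp (-(π:ℂ) * (‖x‖^2:ℝ) +
          (π:ℂ)^2 * ((‖x‖:ℂ)^2 - 2*Complex.I*(⟪x,w⟫:ℝ) - (‖w‖:ℂ)^2)
            / ((π:ℂ)/((a : ℂ) + b * I) + π)) := by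
  set c : ℂ := (a : ℂ) + b * I with hc
  have hcre : c.re = a := by simp [hc]
  have hcim : c.im = b := by simp [hc]
  have hc0 : c ≠ 0 := by
    intro h; rw [h] at hcre; simp at hcre; linarith
  set B : ℂ := (π:ℂ)/c + π with hB
  have hBre : 0 < B.re := by
    rw [hB]
    simp only [Complex.add_re, Complex.div_re, Complex.ofReal_re, Complex.ofReal_im,
      hcre, hcim]
    have hns : 0 < Complex.normSq c := Complex.normSq_pos.2 hc0
    have h1 : 0 < π * a / Complex.normSq c := div_pos (by positivity) hns
    have h2 : (0:ℝ) * b / Complex.normSq c = 0 := by ring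
    rw [h2]
    have := Real.pi_pos
    linarith
  rw [Real.fourier_eq']
  have hpt : ∀ y : EuclideanSpace ℝ (Fin d),
      Complex.exp ((↑(-2 * π * ⟪y,w⟫) * Complex.I)) •
        (c ^ (-(d : ℂ) / 2) *
          Complex.exp (-(π : ℂ) * (‖y‖ ^ 2 : ℝ) / c) *
          Complex.exp (-(π : ℂ) * (‖y - x‖ ^ 2 : ℝ))) =
      (c ^ (-(d : ℂ) / 2) * Complex.exp (-(π:ℂ) * (‖x‖^2:ℝ))) *
        Complex.exp (-B * (‖y‖:ℂ)^2 + (2*π*(⟪x,y⟫:ℝ) - 2*π*Complex.I*(⟪y,w⟫:ℝ))) := by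
    intro y
    rw [smul_eq_mul]
    have hns : ‖y - x‖^2 = ‖y‖^2 - 2*⟪x,y⟫ + ‖x‖^2 := by
      rw [norm_sub_sq_real, real_inner_comm]
    have harg : ((-2 * π * ⟪y,w⟫ : ℝ) : ℂ) * Complex.I + (-(π : ℂ) * (‖y‖ ^ 2 : ℝ) / c
          + -(π : ℂ) * (‖y - x‖ ^ 2 : ℝ))
        = -(π:ℂ) * (‖x‖^2:ℝ) + (-B * (‖y‖:ℂ)^2
            + (2*π*(⟪x,y⟫:ℝ) - 2*π*Complex.I*(⟪y,w⟫:ℝ))) := by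
      rw [hns, hB]
      push_cast
      field_simp
      ring
    calc Complex.exp (((-2 * π * ⟪y,w⟫ : ℝ) : ℂ) * Complex.I) *
          (c ^ (-(d : ℂ) / 2) * Complex.exp (-(π : ℂ) * (‖y‖ ^ 2 : ℝ) / c) *
            Complex.exp (-(π : ℂ) * (‖y - x‖ ^ 2 : ℝ)))
        = c ^ (-(d : ℂ) / 2) * Complex.exp (((-2 * π * ⟪y,w⟫ : ℝ) : ℂ) * Complex.I
            + (-(π : ℂ) * (‖y‖ ^ 2 : ℝ) / c + -(π : ℂ) * (‖y - x‖ ^ 2 : ℝ))) := by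
          rw [Complex.exp_add, Complex.exp_add]; ring
      _ = _ := by rw [harg, Complex.exp_add]; ring
  simp_rw [hpt]
  rw [MeasureTheory.integral_const_mul, lemA B hBre x w, Complex.exp_add]
  ring
end main

lemma realGaussInt {d : ℕ} (β γ : ℝ) (hβ : 0 < β) (x : EuclideanSpace ℝ (Fin d)) :
    Integrable (fun w : EuclideanSpace ℝ (Fin d) => Real.exp (-β*‖w‖^2 + γ*⟪x,w⟫)) := by
  have h := GaussianFourier.integrable_cexp_neg_mul_sq_norm_add
    (V := EuclideanSpace ℝ (Fin d)) (b := (β:ℂ)) (by simp [hβ]) (γ:ℂ) x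
  refine h.norm.congr ?_
  filter_upwards with w
  have hre : (-(β:ℂ) * (‖w‖:ℂ)^2 + (γ:ℂ) * ((⟪x,w⟫:ℝ):ℂ)).re
      = -β*‖w‖^2 + γ*⟪x,w⟫ := by
    simp [← Complex.ofReal_pow]
  rw [Complex.norm_exp, hre]

lemma realGauss {d : ℕ} (β γ : ℝ) (hβ : 0 < β) (x : EuclideanSpace ℝ (Fin d)) :
    ∫ w : EuclideanSpace ℝ (Fin d), Real.exp (-β*‖w‖^2 + γ*⟪x,w⟫) =
      (π/β)^((d:ℝ)/2) * Real.exp (γ^2*‖x‖^2/(4*β)) := by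
  have h := GaussianFourier.integral_cexp_neg_mul_sq_norm_add
    (V := EuclideanSpace ℝ (Fin d)) (b := (β:ℂ)) (by simp [hβ]) (γ:ℂ) x
  rw [finrank_euclideanSpace] at h
  rw [Fintype.card_fin] at h
  have hL : ∫ v : EuclideanSpace ℝ (Fin d), Complex.exp (-(β:ℂ) * ‖v‖^2 + (γ:ℂ) * ⟪x,v⟫) =
      ((∫ w : EuclideanSpace ℝ (Fin d), Real.exp (-β*‖w‖^2 + γ*⟪x,w⟫) : ℝ) : ℂ) := by
    rw [show (fun v : EuclideanSpace ℝ (Fin d) =>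
        Complex.exp (-(β:ℂ) * (‖v‖:ℂ)^2 + (γ:ℂ) * ((⟪x,v⟫:ℝ):ℂ))) =
        (fun v : EuclideanSpace ℝ (Fin d) =>
          ((Real.exp (-β*‖v‖^2 + γ*⟪x,v⟫) : ℝ) : ℂ)) from by
      funext v
      rw [Complex.ofReal_exp]
      norm_cast]
    exact integral_ofReal
  rw [hL] at h
  have hR : ((π:ℂ) / (β:ℂ)) ^ ((d:ℂ) / 2) * Complex.exp ((γ:ℂ)^2 * ‖x‖^2 / (4*(β:ℂ))) =
      (((π/β)^((d:ℝ)/2) * Real.exp (γ^2*‖x‖^2/(4*β)) : ℝ) : ℂ) := by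
    push_cast
    rw [Complex.ofReal_cpow (by positivity) ((d:ℝ)/2)]
    push_cast
    ring_nf
  rw [hR] at h
  exact_mod_cast h

lemma lemC (d : ℕ) (a b : ℝ) (ha : 0 < a) (x w : EuclideanSpace ℝ (Fin d)) :
    ‖(𝓕 (fun y : EuclideanSpace ℝ (Fin d) =>
            ((a : ℂ) + b * I) ^ (-(d : ℂ) / 2) *
              Complex.exp (-(π : ℂ) * (‖y‖ ^ 2 : ℝ) / ((a : ℂ) + b * I)) *
              Complex.exp (-(π : ℂ) * (‖y - x‖ ^ 2 : ℝ)))) w‖ =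
      ((a+1)^2+b^2) ^ (-(d:ℝ)/4) *
        Real.exp (-π*‖x‖^2 +
          π*((a*(a+1)+b^2)*‖x‖^2 + 2*b*⟪x,w⟫ - (a*(a+1)+b^2)*‖w‖^2)/((a+1)^2+b^2)) := by
  have hD : (0:ℝ) < (a+1)^2+b^2 := by nlinarith [sq_nonneg b, sq_nonneg (a+1)]
  rw [lemB d a b ha x w]
  set c : ℂ := (a : ℂ) + b * I with hc
  have hcre : c.re = a := by simp [hc]
  have hcim : c.im = b := by simp [hc]
  have hc0 : c ≠ 0 := by
    intro h; rw [h] at hcre; simp at hcre; linarith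
  have h1cre : ((1:ℂ)+c).re = 1+a := by simp [hc]
  have h1c0 : (1:ℂ)+c ≠ 0 := by
    intro h; rw [h] at h1cre; simp at h1cre; linarith
  have hπ : ((π:ℝ):ℂ) ≠ 0 := Complex.ofReal_ne_zero.2 Real.pi_ne_zero
  have hstep : (π:ℂ)/c + π = ((π:ℂ) + π*c)/c := div_add' _ _ _ hc0
  have hBne : (π:ℂ)/c + π ≠ 0 := by
    rw [hstep, show (π:ℂ)+π*c = π*(1+c) by ring]
    exact div_ne_zero (mul_ne_zero hπ h1c0) hc0
  have hπB : (π:ℂ)/((π:ℂ)/c + π) = c/(1+c) := by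
    rw [hstep, show (π:ℂ)+π*c = π*(1+c) by ring, div_div_eq_mul_div,
      mul_div_mul_left c (1+c) hπ]
  rw [norm_mul, norm_mul]
  have e1 : ‖c ^ (-(d : ℂ) / 2)‖ = ‖c‖ ^ (-(d:ℝ)/2) := by
    rw [show (-(d : ℂ) / 2) = ((-(d:ℝ)/2 : ℝ) : ℂ) by push_cast; ring,
      Complex.norm_cpow_real]
  have e2 : ‖((π:ℂ)/((π:ℂ)/c + π)) ^ ((d:ℂ)/2)‖
      = (‖c‖ / ‖1+c‖) ^ ((d:ℝ)/2) := by
    rw [show ((d : ℂ) / 2) = (((d:ℝ)/2 : ℝ) : ℂ) by push_cast; ring,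
      Complex.norm_cpow_real, hπB, norm_div]
  have hac : 0 < ‖c‖ := norm_pos_iff.2 hc0
  have ha1c : 0 < ‖1+c‖ := norm_pos_iff.2 h1c0
  have h0 : ‖c‖ ^ (-(d:ℝ)/2) * (‖c‖ / ‖1+c‖) ^ ((d:ℝ)/2)
      = ‖1+c‖ ^ (-((d:ℝ)/2)) := by
    simp only [neg_div]
    rw [Real.div_rpow hac.le ha1c.le, Real.rpow_neg hac.le, Real.rpow_neg ha1c.le]
    have h1 : ‖c‖ ^ ((d:ℝ)/2) ≠ 0 := (Real.rpow_pos_of_pos hac _).ne'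
    have h2 : ‖1+c‖ ^ ((d:ℝ)/2) ≠ 0 := (Real.rpow_pos_of_pos ha1c _).ne'
    field_simp
  have habs1c : ‖1+c‖ = Real.sqrt ((a+1)^2+b^2) := by
    rw [Complex.norm_def]; congr 1; rw [Complex.normSq_apply]; simp [hc]; ring
  have hKK : ‖1+c‖ ^ (-((d:ℝ)/2)) = ((a+1)^2+b^2) ^ (-(d:ℝ)/4) := by
    rw [habs1c, Real.sqrt_eq_rpow, ← Real.rpow_mul hD.le]
    congr 1
    ring
  have hz2 : (π:ℂ)^2 * ((‖x‖:ℂ)^2 - 2*Complex.I*((⟪x,w⟫:ℝ):ℂ) - (‖w‖:ℂ)^2)/((π:ℂ)/c + π)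
      = (π:ℂ) * (c * ((‖x‖:ℂ)^2 - 2*Complex.I*((⟪x,w⟫:ℝ):ℂ) - (‖w‖:ℂ)^2)) / (1+c) := by
    rw [div_eq_div_iff hBne h1c0, hstep]
    field_simp
  rw [e1, e2, h0, hKK, Complex.norm_exp, hz2]
  congr 1
  have hre : ((-(π:ℂ) * ((‖x‖^2:ℝ):ℂ)) +
      (π:ℂ) * (c * ((‖x‖:ℂ)^2 - 2*Complex.I*((⟪x,w⟫:ℝ):ℂ) - (‖w‖:ℂ)^2)) / (1+c)).re
      = -π*‖x‖^2 +
        π*((a*(a+1)+b^2)*‖x‖^2 + 2*b*⟪x,w⟫ - (a*(a+1)+b^2)*‖w‖^2)/((a+1)^2+b^2) := by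
    have hD' : (1+a)*(1+a)+b*b ≠ 0 := by nlinarith [sq_nonneg b, sq_nonneg (a+1)]
    simp only [Complex.div_re, Complex.add_re, Complex.add_im, Complex.mul_re, Complex.mul_im,
      Complex.sub_re, Complex.sub_im, Complex.I_re, Complex.I_im, Complex.ofReal_re,
      Complex.ofReal_im, Complex.one_re, Complex.one_im, Complex.normSq_apply, hcre, hcim,
      Complex.neg_re, Complex.neg_im, ← Complex.ofReal_pow, Complex.re_ofNat, Complex.im_ofNat]
    field_simp
    ring
  rw [hre]

lemma finalAlg (a b q X : ℝ) (ha : 0 < a) (hq0 : 0 < q) (d : ℕ) :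
    ((((a+1)^2+b^2) ^ (-(d:ℝ)/4)) ^ q *
      Real.exp (q*(-π*X + π*((a*(a+1)+b^2)*X)/((a+1)^2+b^2))) *
      ((π/(π*q*(a*(a+1)+b^2)/((a+1)^2+b^2))) ^ ((d:ℝ)/2) *
        Real.exp ((2*π*q*b/((a+1)^2+b^2))^2*X/(4*(π*q*(a*(a+1)+b^2)/((a+1)^2+b^2)))))) ^ ((1:ℝ)/q)
    = ((a+1)^2+b^2) ^ ((d:ℝ)/2*(1/q-1/2)) * q ^ (-(d:ℝ)/(2*q)) *
        (a*(a+1)+b^2) ^ (-(d:ℝ)/(2*q)) * Real.exp (-π*a*X/(a*(a+1)+b^2)) := by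
  have hA : (0:ℝ) < (a+1)^2+b^2 := by nlinarith [sq_nonneg b, sq_nonneg (a+1)]
  have hP : (0:ℝ) < a*(a+1)+b^2 := by nlinarith [sq_nonneg b]
  have hπ := Real.pi_pos
  have hβπ : π/(π*q*(a*(a+1)+b^2)/((a+1)^2+b^2)) = ((a+1)^2+b^2)/(q*(a*(a+1)+b^2)) := by
    rw [div_div_eq_mul_div, div_eq_div_iff (by positivity) (by positivity)]
    ring
  rw [hβπ]
  refine Real.log_injOn_pos (Set.mem_Ioi.2 (by positivity)) (Set.mem_Ioi.2 (by positivity)) ?_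
  rw [Real.log_rpow (by positivity),
    Real.log_mul (by positivity) (by positivity),
    Real.log_mul (by positivity) (by positivity),
    Real.log_mul (by positivity) (by positivity),
    Real.log_rpow (by positivity),
    Real.log_rpow (by positivity),
    Real.log_exp, Real.log_exp,
    Real.log_rpow (by positivity),
    Real.log_div (by positivity) (by positivity),
    Real.log_mul (by positivity) (by positivity),
    Real.log_mul (by positivity) (by positivity),
    Real.log_mul (by positivity) (by positivity),
    Real.log_mul (by positivity) (by positivity),
    Real.log_rpow hA, Real.log_rpow hq0, Real.log_rpow hP,
    Real.log_exp]
  field_simp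
  ring

/-- For `G_{a+ib}(x) = (a+ib)^{-d/2} e^{-π|x|²/(a+ib)}`, `g(y)=e^{-π|y|²}`, `a > 0`
and `1 ≤ q < ∞`,
`‖𝓕(G_{a+ib} T_x g)‖_{L^q} = ((a+1)²+b²)^{(d/2)(1/q-1/2)} q^{-d/(2q)}
  (a(a+1)+b²)^{-d/(2q)} e^{-πa|x|²/(a(a+1)+b²)}`. -/
theorem gaussian_stft_Lq_norm (d : ℕ) (a b : ℝ) (ha : 0 < a) (q : ℝ) (hq : 1 ≤ q)
    (x : EuclideanSpace ℝ (Fin d)) :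
    eLpNorm
        (𝓕 (fun y : EuclideanSpace ℝ (Fin d) =>
            ((a : ℂ) + b * I) ^ (-(d : ℂ) / 2) *
              Complex.exp (-(π : ℂ) * (‖y‖ ^ 2 : ℝ) / ((a : ℂ) + b * I)) *
              Complex.exp (-(π : ℂ) * (‖y - x‖ ^ 2 : ℝ))))
        (ENNReal.ofReal q) volume =
      ENNReal.ofReal
        (((a + 1) ^ 2 + b ^ 2) ^ ((d : ℝ) / 2 * (1 / q - 1 / 2)) *
          q ^ (-(d : ℝ) / (2 * q)) *
          (a * (a + 1) + b ^ 2) ^ (-(d : ℝ) / (2 * q)) *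
          Real.exp (-π * a * ‖x‖ ^ 2 / (a * (a + 1) + b ^ 2))) := by
  have hq0 : (0:ℝ) < q := lt_of_lt_of_le one_pos hq
  have hA : (0:ℝ) < (a+1)^2+b^2 := by nlinarith [sq_nonneg b, sq_nonneg (a+1)]
  have hP : (0:ℝ) < a*(a+1)+b^2 := by nlinarith [sq_nonneg b]
  have hπ := Real.pi_pos
  set β : ℝ := π*q*(a*(a+1)+b^2)/((a+1)^2+b^2) with hβdef
  have hβ : 0 < β := by rw [hβdef]; positivity
  set γ : ℝ := 2*π*q*b/((a+1)^2+b^2) with hγdef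
  have hp0 : (ENNReal.ofReal q) ≠ 0 := (ENNReal.ofReal_pos.2 hq0).ne'
  rw [eLpNorm_eq_lintegral_rpow_enorm_toReal hp0 ENNReal.ofReal_ne_top,
    ENNReal.toReal_ofReal hq0.le]
  have hpoint : ∀ w : EuclideanSpace ℝ (Fin d),
      ((‖(𝓕 (fun y : EuclideanSpace ℝ (Fin d) =>
            ((a : ℂ) + b * I) ^ (-(d : ℂ) / 2) *
              Complex.exp (-(π : ℂ) * (‖y‖ ^ 2 : ℝ) / ((a : ℂ) + b * I)) *
              Complex.exp (-(π : ℂ) * (‖y - x‖ ^ 2 : ℝ)))) w‖₊ : ℝ≥0∞)) ^ q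
      = ENNReal.ofReal (
          ((((a+1)^2+b^2) ^ (-(d:ℝ)/4)) ^ q *
            Real.exp (q*(-π*‖x‖^2 + π*((a*(a+1)+b^2)*‖x‖^2)/((a+1)^2+b^2)))) *
          Real.exp (-β*‖w‖^2 + γ*⟪x,w⟫)) := by
    intro w
    rw [← ENNReal.ofReal_coe_nnreal, coe_nnnorm, ENNReal.ofReal_rpow_of_nonneg (norm_nonneg _) hq0.le,
      lemC d a b ha x w]
    congr 1
    rw [Real.mul_rpow (by positivity) (Real.exp_nonneg _), ← Real.exp_mul,
      mul_assoc ((((a+1)^2+b^2) ^ (-(d:ℝ)/4)) ^ q), ← Real.exp_add]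
    congr 1
    rw [hβdef, hγdef]
    field_simp
    ring
  simp only [enorm_eq_nnnorm]
  rw [lintegral_congr hpoint]
  have hInt : Integrable (fun w : EuclideanSpace ℝ (Fin d) =>
      ((((a+1)^2+b^2) ^ (-(d:ℝ)/4)) ^ q *
        Real.exp (q*(-π*‖x‖^2 + π*((a*(a+1)+b^2)*‖x‖^2)/((a+1)^2+b^2)))) *
      Real.exp (-β*‖w‖^2 + γ*⟪x,w⟫)) := (realGaussInt β γ hβ x).const_mul _
  have hnn : (0:EuclideanSpace ℝ (Fin d) → ℝ) ≤ᵐ[volume] fun w =>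
      ((((a+1)^2+b^2) ^ (-(d:ℝ)/4)) ^ q *
        Real.exp (q*(-π*‖x‖^2 + π*((a*(a+1)+b^2)*‖x‖^2)/((a+1)^2+b^2)))) *
      Real.exp (-β*‖w‖^2 + γ*⟪x,w⟫) :=
    Filter.Eventually.of_forall fun w => by positivity
  rw [← MeasureTheory.ofReal_integral_eq_lintegral_ofReal hInt hnn,
    MeasureTheory.integral_const_mul, realGauss β γ hβ x,
    ENNReal.ofReal_rpow_of_nonneg (by positivity) (by positivity)]
  congr 1
  rw [hβdef, hγdef]
  exact finalAlg a b q (‖x‖^2) ha hq0 d
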